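/- Let (Δ,u) be a labeled polytope in ℝⁿ that is monotone, i.e. there exist μ* in the interior of Δ and c > 0 with L_l(μ*) = c for every l = 1,…,d. Then: (i) all the defining functions L_l = (λ_l, u_l) lie in the affine hyperplane {b ∈ ℝ × ℝⁿ : b(μ*) = c} of Aff(ℝⁿ,ℝ); (ii) for every b ∈ C*₊(Δ), the point y* = (1,μ*)/b(μ*) belongs to Δ_b = C(Δ) ∩ {y : ⟨y,b⟩ = 1}, lies in Ψ_b(int Δ), and satisfies ⟨y*, L_l⟩ = c/b(μ*) > 0 for every l, a value independent of l; in particular every characteristic polytope Δ_b of C(Δ) is monotone. -/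
import Mathlib


open scoped RealInnerProductSpace
open MeasureTheory

noncomputable section

/-- A labeled polytope datum in `ℝⁿ`: `d` inward normals `u l` together with
constants `lam l`, giving defining affine functions `L l x = ⟪u l, x⟫ + lam l`. -/
structure LabeledPolytope (n d : ℕ) where
  u : Fin d → EuclideanSpace ℝ (Fin n)
  lam : Fin d → ℝ

namespace LabeledPolytope

variable {n d : ℕ}

/-- The defining affine functions `L_l`. -/
def L (P : LabeledPolytope n d) (l : Fin d) (x : EuclideanSpace ℝ (Fin n)) : ℝ :=
  ⟪P.u l, x⟫ + P.lam l

/-- The polytope `Δ = {x | L_l x ≥ 0 ∀ l}`. -/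
def Delta (P : LabeledPolytope n d) : Set (EuclideanSpace ℝ (Fin n)) :=
  {x | ∀ l, 0 ≤ P.L l x}

/-- The facet `F_l = Δ ∩ {L_l = 0}`. -/
def Facet (P : LabeledPolytope n d) (l : Fin d) : Set (EuclideanSpace ℝ (Fin n)) :=
  {x | x ∈ P.Delta ∧ P.L l x = 0}

/-- `(Δ,u)` is a labeled polytope: `n ≥ 1`, `Δ` is a compact polytope with nonempty
interior, and each `F_l` is a nonempty facet of dimension `n - 1`. -/
structure IsLabeledPolytope (P : LabeledPolytope n d) : Prop where
  npos : 1 ≤ n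
  compact : IsCompact P.Delta
  int_nonempty : (interior P.Delta).Nonempty
  facet_nonempty : ∀ l, (P.Facet l).Nonempty
  facet_dim : ∀ l, Module.finrank ℝ (affineSpan ℝ (P.Facet l)).direction = n - 1

/-- The value of the affine function `b = (b₀, b′)` at `x`. -/
def bval (b : ℝ × EuclideanSpace ℝ (Fin n)) (x : EuclideanSpace ℝ (Fin n)) : ℝ :=
  b.1 + ⟪b.2, x⟫

/-- The pairing `⟨(y₀,y),(b₀,b′)⟩ = b₀ y₀ + ⟨b′, y⟩`. -/
def pairing (y b : ℝ × EuclideanSpace ℝ (Fin n)) : ℝ :=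
  b.1 * y.1 + ⟪b.2, y.2⟫

/-- The cone `C(Δ) = {(y₀,y) | λ_l y₀ + ⟨u_l, y⟩ ≥ 0 ∀ l} ⊆ ℝ^{1+n}`. -/
def Cone (P : LabeledPolytope n d) : Set (ℝ × EuclideanSpace ℝ (Fin n)) :=
  {y | ∀ l, 0 ≤ P.lam l * y.1 + ⟪P.u l, y.2⟫}

/-- The dual cone `C*(Δ)`. -/
def Cstar (P : LabeledPolytope n d) : Set (ℝ × EuclideanSpace ℝ (Fin n)) :=
  {b | ∀ y ∈ P.Cone, 0 ≤ pairing y b}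

/-- `C*₊(Δ)`: affine functions strictly positive on `Δ`. -/
def CstarPlus (P : LabeledPolytope n d) : Set (ℝ × EuclideanSpace ℝ (Fin n)) :=
  {b | ∀ μ ∈ P.Delta, 0 < bval b μ}

/-- The map `Ψ_b(μ) = (1,μ)/b(μ)`. -/
def Psi (b : ℝ × EuclideanSpace ℝ (Fin n)) (x : EuclideanSpace ℝ (Fin n)) :
    ℝ × EuclideanSpace ℝ (Fin n) :=
  (bval b x)⁻¹ • ((1 : ℝ), x)

/-- The boundary measure `σ_l`: `‖u_l‖⁻¹` times the `(n-1)`-dimensional Hausdorff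
measure restricted to the facet `F_l`. -/
def facetMeasure (P : LabeledPolytope n d) (l : Fin d) :
    Measure (EuclideanSpace ℝ (Fin n)) :=
  (ENNReal.ofReal ‖P.u l‖⁻¹) • (μH[(n : ℝ) - 1]).restrict (P.Facet l)

/-- `W₀₀(b) = ∫_Δ b(μ)^{-(n+1)} dμ`. -/
def W00 (P : LabeledPolytope n d) (b : ℝ × EuclideanSpace ℝ (Fin n)) : ℝ :=
  ∫ μ in P.Delta, (bval b μ ^ (n + 1))⁻¹

/-- `W_{i0}(b) = ∫_Δ μ_i b(μ)^{-(n+2)} dμ`. -/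
def Wi0 (P : LabeledPolytope n d) (i : Fin n) (b : ℝ × EuclideanSpace ℝ (Fin n)) : ℝ :=
  ∫ μ in P.Delta, μ i * (bval b μ ^ (n + 2))⁻¹

/-- `Z₀(b) = 2 Σ_l ∫_{F_l} b(μ)^{-n} dσ_l`. -/
def Z0 (P : LabeledPolytope n d) (b : ℝ × EuclideanSpace ℝ (Fin n)) : ℝ :=
  2 * ∑ l, ∫ μ, (bval b μ ^ n)⁻¹ ∂(P.facetMeasure l)

/-- `Z_i(b) = 2 Σ_l ∫_{F_l} μ_i b(μ)^{-(n+1)} dσ_l`. -/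
def Zi (P : LabeledPolytope n d) (i : Fin n) (b : ℝ × EuclideanSpace ℝ (Fin n)) : ℝ :=
  2 * ∑ l, ∫ μ, μ i * (bval b μ ^ (n + 1))⁻¹ ∂(P.facetMeasure l)

/-- `Ω = {b ∈ C*₊(Δ) : b₀ = 1}`, viewed as an open subset of `ℝⁿ` via `b ↔ b′`. -/
def Omega (P : LabeledPolytope n d) : Set (EuclideanSpace ℝ (Fin n)) :=
  {b' | ((1 : ℝ), b') ∈ P.CstarPlus}

/-- The functional `F(b) = Z₀(b)^{n+1} / W₀₀(b)ⁿ` as a function of `b′` (with `b₀ = 1`). -/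
def Fcal (P : LabeledPolytope n d) (b' : EuclideanSpace ℝ (Fin n)) : ℝ :=
  P.Z0 (1, b') ^ (n + 1) / P.W00 (1, b') ^ n

end LabeledPolytope

open LabeledPolytope in
/-- If `(Δ,u)` is monotone with `L_l(μ*) = c > 0` for all `l` and `μ*`
interior to `Δ`, then: (i) all the defining functions `L_l = (λ_l, u_l)` lie in the affine
hyperplane `{b : b(μ*) = c}`; (ii) for every `b ∈ C*₊(Δ)`, the point `y* = (1,μ*)/b(μ*)`
belongs to `Δ_b = C(Δ) ∩ {⟨·,b⟩ = 1}`, lies in `Ψ_b(int Δ)`, and satisfies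
`⟨y*, L_l⟩ = c/b(μ*) > 0` for every `l`; in particular every characteristic polytope of
`C(Δ)` is monotone. -/
theorem stmt10 {n d : ℕ} (P : LabeledPolytope n d) (hP : P.IsLabeledPolytope)
    (μs : EuclideanSpace ℝ (Fin n)) (c : ℝ)
    (hμs : μs ∈ interior P.Delta) (hc : 0 < c) (hmono : ∀ l, P.L l μs = c) :
    (∀ l, bval (P.lam l, P.u l) μs = c) ∧
      ∀ b ∈ P.CstarPlus,
        Psi b μs ∈ P.Cone ∧ pairing (Psi b μs) b = 1 ∧
          Psi b μs ∈ Psi b '' interior P.Delta ∧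
          (∀ l, pairing (Psi b μs) (P.lam l, P.u l) = c / bval b μs) ∧
          0 < c / bval b μs := by
  have hΔ : μs ∈ P.Delta := interior_subset hμs
  have h1 : ∀ l, bval (P.lam l, P.u l) μs = c := by
    intro l
    have := hmono l
    simpa [bval, LabeledPolytope.L, add_comm] using this
  refine ⟨h1, fun b hb => ?_⟩
  have hbpos : 0 < bval b μs := hb μs hΔ
  have hbne : bval b μs ≠ 0 := ne_of_gt hbpos
  have hfst : ((bval b μs)⁻¹ • ((1:ℝ), μs)).1 = (bval b μs)⁻¹ * 1 := rfl
  have hsnd : ((bval b μs)⁻¹ • ((1:ℝ), μs)).2 = (bval b μs)⁻¹ • μs := rfl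
  constructor
  · intro l
    show 0 ≤ P.lam l * ((bval b μs)⁻¹ • ((1:ℝ), μs)).1 + ⟪P.u l, ((bval b μs)⁻¹ • ((1:ℝ), μs)).2⟫
    rw [hfst, hsnd, real_inner_smul_right]
    have hLc : P.lam l + ⟪P.u l, μs⟫ = c := by
      have := h1 l; simpa [bval] using this
    have heq : P.lam l * ((bval b μs)⁻¹ * 1) + (bval b μs)⁻¹ * ⟪P.u l, μs⟫ =
        (bval b μs)⁻¹ * (P.lam l + ⟪P.u l, μs⟫) := by ring
    rw [heq, hLc]
    positivity
  refine ⟨?_, ⟨μs, hμs, rfl⟩, ?_, by positivity⟩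
  · show b.1 * ((bval b μs)⁻¹ • ((1:ℝ), μs)).1 + ⟪b.2, ((bval b μs)⁻¹ • ((1:ℝ), μs)).2⟫ = 1
    rw [hfst, hsnd, real_inner_smul_right]
    have heq : b.1 * ((bval b μs)⁻¹ * 1) + (bval b μs)⁻¹ * ⟪b.2, μs⟫ =
        (bval b μs)⁻¹ * (b.1 + ⟪b.2, μs⟫) := by ring
    rw [heq]
    exact inv_mul_cancel₀ hbne
  · intro l
    show P.lam l * ((bval b μs)⁻¹ • ((1:ℝ), μs)).1 + ⟪P.u l, ((bval b μs)⁻¹ • ((1:ℝ), μs)).2⟫ = _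
    rw [hfst, hsnd, real_inner_smul_right]
    have hLc : P.lam l + ⟪P.u l, μs⟫ = c := by
      have := h1 l; simpa [bval] using this
    have heq : P.lam l * ((bval b μs)⁻¹ * 1) + (bval b μs)⁻¹ * ⟪P.u l, μs⟫ =
        (bval b μs)⁻¹ * (P.lam l + ⟪P.u l, μs⟫) := by ring
    rw [heq, hLc, div_eq_inv_mul]
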